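/- For a convex subspace E of D and a coordinate c over dep(E) (a total in-bounds function on dep(E)), the subcoordinate space {c|E : c ∈ C(E↓; R), c|dep(E) = c_dep} equals the coordinate space of the restricted shape: there exists a shape R' on the subposet (E, ≺|E) such that the subcoordinate space over (E, c_dep) equals C(E; R'). -/

import Mathlib

open Classical

/-- The (principal) dependency space of a dimension: all strict ancestors. -/
def dep {D : Type} (prec : D → D → Prop) (d : D) : Set D := {e | prec e d}

/-- Restriction of a partial function (modeled via `Option`) to a set. -/
noncomputable def restrict {D : Type} (c : D → Option ℕ) (S : Set D) : D → Option ℕ :=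
  fun e => if e ∈ S then c e else none

/-- Domain of a partial function. -/
def pdom {D : Type} (c : D → Option ℕ) : Set D := {e | c e ≠ none}

/-- A resolution map sends pairs `(d, c)` with `c` total exactly on `dep d` to lengths. -/
def ResMapOk {D : Type} (prec : D → D → Prop) (R : D → (D → Option ℕ) → Option ℕ) : Prop :=
  ∀ d c, R d c ≠ none → pdom c = dep prec d

/-- The in-bounds condition `ib(R; c)`. -/
def ib {D : Type} (prec : D → D → Prop) (R : D → (D → Option ℕ) → Option ℕ)
    (c : D → Option ℕ) : Prop :=
  ∀ d v, c d = some v → ∃ ℓ, R d (restrict c (dep prec d)) = some ℓ ∧ v < ℓ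

/-- A partial shape: every resolution present is in-bounds. -/
def IsPartialShape {D : Type} (prec : D → D → Prop)
    (R : D → (D → Option ℕ) → Option ℕ) : Prop :=
  ResMapOk prec R ∧ ∀ d c, R d c ≠ none → ib prec R c

/-- A (complete) shape: membership in the domain is equivalent to in-boundedness. -/
def IsShape {D : Type} (prec : D → D → Prop)
    (R : D → (D → Option ℕ) → Option ℕ) : Prop :=
  ResMapOk prec R ∧ ∀ d c, pdom c = dep prec d → (R d c ≠ none ↔ ib prec R c)

/-- Compatibility of a pair `(d, c)` with a partial shape. -/
def compat {D : Type} (prec : D → D → Prop) (R : D → (D → Option ℕ) → Option ℕ)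
    (d : D) (c : D → Option ℕ) : Prop :=
  pdom c = dep prec d ∧ ib prec R c ∧ R d c = none

/-- Extending a resolution map by one resolution `(d, c) ↦ ℓ`. -/
noncomputable def extend {D : Type} (R : D → (D → Option ℕ) → Option ℕ)
    (d : D) (c : D → Option ℕ) (ℓ : ℕ) : D → (D → Option ℕ) → Option ℕ :=
  fun d' c' => if d' = d ∧ c' = c then some ℓ else R d' c'

/-- Downward closedness of a set with respect to a relation. -/
def DownClosed {D : Type} (prec : D → D → Prop) (F : Set D) : Prop :=
  ∀ a b, prec a b → b ∈ F → a ∈ F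

/-- A coordinate with unknowns over a (downward closed) set `F`. -/
def CoordU {D : Type} (prec : D → D → Prop) (R : D → (D → Option ℕ) → Option ℕ)
    (F : Set D) (c : D → Option ℕ) : Prop :=
  pdom c ⊆ F ∧ ib prec R c ∧ ∀ e ∈ F, c e = none → R e (restrict c (dep prec e)) = none

/-- Downward closure under the reflexive closure of `prec`. -/
def dcl {D : Type} (prec : D → D → Prop) (E : Set D) : Set D :=
  {x | ∃ e ∈ E, x = e ∨ prec x e}

/-- Dependency space of a subspace. -/
def depS {D : Type} (prec : D → D → Prop) (E : Set D) : Set D := dcl prec E \ E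

section Aux

variable {D : Type}

lemma mem_pdom' {c : D → Option ℕ} {x : D} : x ∈ pdom c ↔ c x ≠ none := Iff.rfl

lemma pdom_restrict' (c : D → Option ℕ) (S : Set D) : pdom (restrict c S) = S ∩ pdom c := by
  ext x
  simp only [pdom, restrict, Set.mem_setOf_eq, Set.mem_inter_iff]
  split_ifs with h <;> simp [h]

lemma restrict_eq_of_agree' {c c' : D → Option ℕ} {S : Set D}
    (h : ∀ x ∈ S, c x = c' x) : restrict c S = restrict c' S := by
  funext x; simp only [restrict]; split_ifs with hx
  · exact h x hx
  · rfl

lemma restrict_restrict' {c : D → Option ℕ} {S T : Set D} (h : T ⊆ S) :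
    restrict (restrict c S) T = restrict c T := by
  funext x; simp only [restrict]
  by_cases hx : x ∈ T
  · rw [if_pos hx, if_pos hx, if_pos (h hx)]
  · rw [if_neg hx, if_neg hx]

/-- Glue a coordinate on the subspace `E` with the fixed coordinate `cdep` outside. -/
noncomputable def glue (E : Set D) (cdep : D → Option ℕ) (cs : ↥E → Option ℕ) :
    D → Option ℕ :=
  fun x => if h : x ∈ E then cs ⟨x, h⟩ else cdep x

/-- The restricted shape on the subspace. -/
noncomputable def resShape (prec : D → D → Prop) (R : D → (D → Option ℕ) → Option ℕ)
    (E : Set D) (cdep : D → Option ℕ) : ↥E → (↥E → Option ℕ) → Option ℕ :=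
  fun e cs => if pdom cs = dep (fun a b : ↥E => prec a b) e then
      R e.val (restrict (glue E cdep cs) (dep prec e.val)) else none

lemma glue_restrict_agree (prec : D → D → Prop) (E : Set D) (cdep : D → Option ℕ)
    (cs : ↥E → Option ℕ) (d : ↥E) :
    restrict (glue E cdep (restrict cs (dep (fun a b : ↥E => prec a b) d))) (dep prec d.val)
      = restrict (glue E cdep cs) (dep prec d.val) := by
  apply restrict_eq_of_agree'
  intro x hx
  simp only [glue]
  by_cases hE : x ∈ E
  · rw [dif_pos hE, dif_pos hE, restrict, if_pos]
    exact hx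
  · rw [dif_neg hE, dif_neg hE]

lemma resShape_apply (prec : D → D → Prop) (R : D → (D → Option ℕ) → Option ℕ)
    (E : Set D) (cdep : D → Option ℕ) (cs : ↥E → Option ℕ) (d : ↥E)
    (h : dep (fun a b : ↥E => prec a b) d ⊆ pdom cs) :
    resShape prec R E cdep d (restrict cs (dep (fun a b : ↥E => prec a b) d)) =
      R d.val (restrict (glue E cdep cs) (dep prec d.val)) := by
  have hp : pdom (restrict cs (dep (fun a b : ↥E => prec a b) d))
      = dep (fun a b : ↥E => prec a b) d := by
    rw [pdom_restrict']
    exact Set.inter_eq_left.mpr h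
  simp only [resShape, if_pos hp, glue_restrict_agree]

/-- The central equivalence of in-bounds conditions. -/
lemma ib_equiv (prec : D → D → Prop) (R : D → (D → Option ℕ) → Option ℕ)
    (E : Set D) (cdep : D → Option ℕ) (h2 : ib prec R cdep)
    (c : D → Option ℕ) (cs : ↥E → Option ℕ)
    (hclosed : ∀ d : ↥E, cs d ≠ none → dep (fun a b : ↥E => prec a b) d ⊆ pdom cs)
    (hEc : ∀ d : ↥E, c d.val = cs d)
    (hdep : ∀ d : ↥E, cs d ≠ none →
      restrict c (dep prec d.val) = restrict (glue E cdep cs) (dep prec d.val))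
    (hout : ∀ d, d ∉ E → ∀ v, c d = some v →
      cdep d = some v ∧ restrict c (dep prec d) = restrict cdep (dep prec d)) :
    ib prec R c ↔ ib (fun a b : ↥E => prec a b) (resShape prec R E cdep) cs := by
  constructor
  · intro hib d v hdv
    have hne : cs d ≠ none := by rw [hdv]; exact Option.some_ne_none v
    have hcd : c d.val = some v := by rw [hEc d, hdv]
    obtain ⟨ℓ, hℓ, hv⟩ := hib d.val v hcd
    refine ⟨ℓ, ?_, hv⟩
    rw [resShape_apply prec R E cdep cs d (hclosed d hne), ← hdep d hne]
    exact hℓ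
  · intro hib d v hdv
    by_cases hE : d ∈ E
    · have hcs : cs ⟨d, hE⟩ = some v := by rw [← hEc ⟨d, hE⟩]; exact hdv
      have hne : cs ⟨d, hE⟩ ≠ none := by rw [hcs]; exact Option.some_ne_none v
      obtain ⟨ℓ, hℓ, hv⟩ := hib ⟨d, hE⟩ v hcs
      refine ⟨ℓ, ?_, hv⟩
      rw [resShape_apply prec R E cdep cs ⟨d, hE⟩ (hclosed _ hne)] at hℓ
      rw [hdep ⟨d, hE⟩ hne]
      exact hℓ
    · obtain ⟨hc1, hc2⟩ := hout d hE v hdv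
      obtain ⟨ℓ, hℓ, hv⟩ := h2 d v hc1
      exact ⟨ℓ, by rw [hc2]; exact hℓ, hv⟩

end Aux

/-- The subcoordinate space over a convex subspace `E` and a coordinate over `dep(E)`
is the coordinate space of a restricted shape on the subposet `(E, ≺|E)`. -/
theorem stmt11 {D : Type} [Fintype D] (prec : D → D → Prop)
    [IsIrrefl D prec] [IsTrans D prec]
    (R : D → (D → Option ℕ) → Option ℕ) (hR : IsShape prec R)
    (E : Set D) (hconv : DownClosed prec (depS prec E))
    (cdep : D → Option ℕ) (h1 : pdom cdep = depS prec E) (h2 : ib prec R cdep) :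
    ∃ R' : ↥E → (↥E → Option ℕ) → Option ℕ,
      IsShape (fun a b : ↥E => prec a b) R' ∧
      {cs : ↥E → Option ℕ | ∃ c : D → Option ℕ,
          pdom c = dcl prec E ∧ ib prec R c ∧ restrict c (depS prec E) = cdep ∧
          ∀ e : ↥E, cs e = c e} =
      {cs : ↥E → Option ℕ | pdom cs = Set.univ ∧ ib (fun a b : ↥E => prec a b) R' cs} := by
  have hEdcl : E ⊆ dcl prec E := fun x hx => ⟨x, hx, Or.inl rfl⟩
  have hdepS : ∀ x e, prec x e → e ∈ E → x ∉ E → x ∈ depS prec E :=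
    fun x e hp he hx => ⟨⟨e, he, Or.inr hp⟩, hx⟩
  have hcdep_ne : ∀ x ∈ depS prec E, cdep x ≠ none := by
    intro x hx
    have : x ∈ pdom cdep := by rw [h1]; exact hx
    exact this
  have hcdep_none : ∀ x, x ∉ depS prec E → cdep x = none := by
    intro x hx
    by_contra h
    exact hx (h1 ▸ (mem_pdom'.mpr h))
  refine ⟨resShape prec R E cdep, ⟨?_, ?_⟩, ?_⟩
  · -- ResMapOk
    intro e cs hne
    by_contra h
    simp only [resShape, if_neg h] at hne
    exact hne rfl
  · -- shape condition
    intro e cs hdom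
    set c : D → Option ℕ := restrict (glue E cdep cs) (dep prec e.val) with hc_def
    have hsubpdom : dep prec e.val ⊆ pdom (glue E cdep cs) := by
      intro x hx
      rw [mem_pdom']
      by_cases hE : x ∈ E
      · simp only [glue, dif_pos hE]
        have : (⟨x, hE⟩ : ↥E) ∈ pdom cs := by
          rw [hdom]; exact hx
        exact this
      · simp only [glue, dif_neg hE]
        exact hcdep_ne x (hdepS x e.val hx e.prop hE)
    have hc : pdom c = dep prec e.val := by
      rw [hc_def, pdom_restrict']
      exact Set.inter_eq_left.mpr hsubpdom
    have hiff := hR.2 e.val c hc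
    have hunfold : resShape prec R E cdep e cs = R e.val c := by
      simp only [resShape, if_pos hdom, hc_def]
    rw [hunfold]
    refine hiff.trans (ib_equiv prec R E cdep h2 c cs ?_ ?_ ?_ ?_)
    · intro d hd x hx
      have hd' : d ∈ pdom cs := hd
      rw [hdom] at hd'
      have hde : prec d.val e.val := hd'
      have hx' : prec x.val d.val := hx
      have : prec x.val e.val := IsTrans.trans _ _ _ hx' hde
      rw [hdom]
      exact this
    · intro d
      by_cases hde : prec d.val e.val
      · have hmem : d.val ∈ dep prec e.val := hde
        simp only [hc_def, restrict, if_pos hmem, glue, dif_pos d.prop]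
      · have hmem : d.val ∉ dep prec e.val := hde
        have hcs : cs d = none := by
          by_contra h
          have : d ∈ pdom cs := h
          rw [hdom] at this
          exact hde this
        simp only [hc_def, restrict, if_neg hmem, hcs]
    · intro d hd
      have hd' : d ∈ pdom cs := hd
      rw [hdom] at hd'
      have hde : prec d.val e.val := hd'
      have hsub : dep prec d.val ⊆ dep prec e.val :=
        fun x hx => IsTrans.trans _ _ _ (show prec x d.val from hx) hde
      rw [hc_def]
      exact restrict_restrict' hsub
    · intro d hdE v hdv
      have hmem : d ∈ dep prec e.val := by
        by_contra h
        rw [hc_def] at hdv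
        simp only [restrict, if_neg h] at hdv
        exact absurd hdv (Option.some_ne_none v).symm
      have hglue : glue E cdep cs d = some v := by
        rw [hc_def] at hdv
        simpa only [restrict, if_pos hmem] using hdv
      have hcd : cdep d = some v := by
        rw [glue, dif_neg hdE] at hglue
        exact hglue
      have hdS : d ∈ depS prec E := hdepS d e.val hmem e.prop hdE
      refine ⟨hcd, ?_⟩
      apply restrict_eq_of_agree'
      intro x hx
      have hxS : x ∈ depS prec E := hconv x d hx hdS
      have hxe : x ∈ dep prec e.val :=
        IsTrans.trans _ _ _ (show prec x d from hx) (show prec d (e.val) from hmem)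
      rw [hc_def]
      simp only [restrict, if_pos hxe, glue, dif_neg hxS.2]
  · -- set equality
    ext cs
    simp only [Set.mem_setOf_eq]
    constructor
    · rintro ⟨c, hpc, hibc, hres, hagree⟩
      have hglue : glue E cdep cs = c := by
        funext x
        by_cases hE : x ∈ E
        · rw [glue, dif_pos hE, hagree ⟨x, hE⟩]
        · rw [glue, dif_neg hE]
          by_cases hS : x ∈ depS prec E
          · rw [← hres]
            simp only [restrict, if_pos hS]
          · have h3 : cdep x = none := hcdep_none x hS
            have h4 : c x = none := by
              by_contra h
              have : x ∈ pdom c := h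
              rw [hpc] at this
              exact hS ⟨this, hE⟩
            rw [h3, h4]
      have htot : ∀ d : ↥E, cs d ≠ none := by
        intro d
        rw [hagree d]
        have : d.val ∈ pdom c := by rw [hpc]; exact hEdcl d.prop
        exact this
      constructor
      · ext d
        simp only [Set.mem_univ, iff_true]
        exact htot d
      · refine (ib_equiv prec R E cdep h2 c cs ?_ ?_ ?_ ?_).mp hibc
        · intro d _ x _
          exact htot x
        · intro d
          exact (hagree d).symm
        · intro d _
          rw [hglue]
        · intro d hdE v hdv
          have hdS : d ∈ depS prec E := by
            have : d ∈ pdom c := mem_pdom'.mpr (by rw [hdv]; exact Option.some_ne_none v)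
            rw [hpc] at this
            exact ⟨this, hdE⟩
          constructor
          · rw [← hres]
            simp only [restrict, if_pos hdS]
            exact hdv
          · apply restrict_eq_of_agree'
            intro x hx
            have hxS : x ∈ depS prec E := hconv x d hx hdS
            rw [← hres]
            simp only [restrict, if_pos hxS]
    · rintro ⟨htot, hib'⟩
      have htot' : ∀ d : ↥E, cs d ≠ none := by
        intro d
        have : d ∈ pdom cs := by rw [htot]; trivial
        exact this
      have hgE : ∀ d : ↥E, glue E cdep cs d.val = cs d := by
        intro d
        rw [glue, dif_pos d.prop]
      refine ⟨glue E cdep cs, ?_, ?_, ?_, fun e => (hgE e).symm⟩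
      · ext x
        by_cases hE : x ∈ E
        · simp only [mem_pdom', glue, dif_pos hE]
          exact ⟨fun _ => hEdcl hE, fun _ => htot' ⟨x, hE⟩⟩
        · simp only [mem_pdom', glue, dif_neg hE]
          constructor
          · intro h
            have hx : x ∈ pdom cdep := h
            rw [h1] at hx
            exact hx.1
          · intro h
            exact hcdep_ne x ⟨h, hE⟩
      · refine (ib_equiv prec R E cdep h2 (glue E cdep cs) cs ?_ hgE (fun _ _ => rfl) ?_).mpr hib'
        · intro d _ x _
          exact htot' x
        · intro d hdE v hdv
          have hcd : cdep d = some v := by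
            rw [glue, dif_neg hdE] at hdv
            exact hdv
          have hdS : d ∈ depS prec E := by
            have : d ∈ pdom cdep := mem_pdom'.mpr (by rw [hcd]; exact Option.some_ne_none v)
            rw [h1] at this
            exact this
          refine ⟨hcd, ?_⟩
          apply restrict_eq_of_agree'
          intro x hx
          have hxS : x ∈ depS prec E := hconv x d hx hdS
          rw [glue, dif_neg hxS.2]
      · funext x
        by_cases hS : x ∈ depS prec E
        · rw [restrict, if_pos hS, glue, dif_neg hS.2]
        · rw [restrict, if_neg hS, hcdep_none x hS]
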